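/- Let M ≥ 1, h > 0, δ ≥ 0, and let H̄_1, …, H̄_M be real numbers with H̄_j ≥ h for all j and |H̄_i − H̄_j| ≤ δ for all pairs i, j. Define the normalized weights w_i = (1/H̄_i) / Σ_{j=1}^M (1/H̄_j). Then for every i, |w_i − 1/M| ≤ δ / (M · H̄_i) ≤ δ / (M · h). -/

import Mathlib

open Finset in
/-- Quantitative Lemma 2: when entropies are closely clustered (pairwise within δ, all at
least h), the normalized inverse-entropy weights are nearly uniform:
|w_i − 1/M| ≤ δ/(M H̄_i) ≤ δ/(M h). -/
theorem clustered_entropies_near_uniform_weights (M : ℕ) (hM : 1 ≤ M)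
    (h δ : ℝ) (hh : 0 < h) (hδ : 0 ≤ δ)
    (H : Fin M → ℝ) (hH : ∀ j, h ≤ H j) (hdiff : ∀ i j, |H i - H j| ≤ δ)
    (i : Fin M) :
    |(1 / H i) / (∑ j, 1 / H j) - 1 / (M : ℝ)| ≤ δ / ((M : ℝ) * H i) ∧
    δ / ((M : ℝ) * H i) ≤ δ / ((M : ℝ) * h) := by
  have hHpos : ∀ j, 0 < H j := fun j => hh.trans_le (hH j)
  have hMpos : (0:ℝ) < M := by exact_mod_cast hM
  have hSpos : 0 < ∑ j, 1 / H j :=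
    Finset.sum_pos (fun j _ => one_div_pos.mpr (hHpos j))
      (Finset.univ_nonempty_iff.mpr (Fin.pos_iff_nonempty.mp hM))
  set S := ∑ j, 1 / H j with hS
  have hSne : S ≠ 0 := hSpos.ne'
  have hHine : H i ≠ 0 := (hHpos i).ne'
  have hMne : (M:ℝ) ≠ 0 := hMpos.ne'
  constructor
  · have key : (1 / H i) / S - 1 / M = (∑ j, (1 / H i - 1 / H j)) / (M * S) := by
      rw [Finset.sum_sub_distrib, Finset.sum_const, Finset.card_univ, Fintype.card_fin, ← hS]
      field_simp [hSpos.ne']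
      ring_nf
      rw [mul_inv_cancel_right₀ hHine]
    rw [key, abs_div, abs_of_pos (mul_pos hMpos hSpos),
      div_le_div_iff₀ (mul_pos hMpos hSpos) (mul_pos hMpos (hHpos i))]
    have hb : |∑ j, (1 / H i - 1 / H j)| ≤ (δ / H i) * S := by
      calc |∑ j, (1 / H i - 1 / H j)| ≤ ∑ j, |1 / H i - 1 / H j| :=
            Finset.abs_sum_le_sum_abs _ _
        _ ≤ ∑ j, (δ / H i) * (1 / H j) := by
            apply Finset.sum_le_sum
            intro j _
            rw [div_sub_div _ _ (hHpos i).ne' (hHpos j).ne', abs_div,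
              abs_of_pos (mul_pos (hHpos i) (hHpos j))]
            rw [div_mul_div_comm, mul_one, one_mul, mul_one]
            exact div_le_div_of_nonneg_right (hdiff j i) (mul_pos (hHpos i) (hHpos j)).le
        _ = (δ / H i) * S := by rw [← Finset.mul_sum, hS]
    calc |∑ j, (1 / H i - 1 / H j)| * ((M:ℝ) * H i)
        ≤ ((δ / H i) * S) * ((M:ℝ) * H i) := by
          exact mul_le_mul_of_nonneg_right hb (mul_pos hMpos (hHpos i)).le
      _ = δ * ((M:ℝ) * S) := by
          field_simp [(hHpos i).ne']
  · gcongr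
    exact hH i
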